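/- Along any solution of the Kowalevski equations in two constant fields, at every time t where M₁(t)² + M₂(t)² ≠ 0, the function S = −(M_α M₁ + M_β M₂)/(M₁² + M₂²) is differentiable and satisfies dS/dt = −[((M₁² + M₂²)ω₃ + 4α₃M₁ + 4β₃M₂)/(2(M₁² + M₂²)²)]·(M_α M₂ − M_β M₁). -/

import Mathlib

/-- Along any solution of the Kowalevski equations in two constant fields, at every time `t`
where `M₁ t ^ 2 + M₂ t ^ 2 ≠ 0`, the function
`S = -(Mα M₁ + Mβ M₂)/(M₁² + M₂²)` is differentiable and its derivative equals
`-[((M₁² + M₂²) ω₃ + 4 α₃ M₁ + 4 β₃ M₂)/(2 (M₁² + M₂²)²)] ⬝ (Mα M₂ - Mβ M₁)`. -/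
theorem stmt_0
    (ω₁ ω₂ ω₃ α₁ α₂ α₃ β₁ β₂ β₃ : ℝ → ℝ)
    (hω₁ : ∀ t, HasDerivAt ω₁ ((ω₂ t * ω₃ t + β₃ t) / 2) t)
    (hω₂ : ∀ t, HasDerivAt ω₂ ((-(ω₁ t * ω₃ t) - α₃ t) / 2) t)
    (hω₃ : ∀ t, HasDerivAt ω₃ (α₂ t - β₁ t) t)
    (hα₁ : ∀ t, HasDerivAt α₁ (α₂ t * ω₃ t - α₃ t * ω₂ t) t)
    (hα₂ : ∀ t, HasDerivAt α₂ (α₃ t * ω₁ t - α₁ t * ω₃ t) t)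
    (hα₃ : ∀ t, HasDerivAt α₃ (α₁ t * ω₂ t - α₂ t * ω₁ t) t)
    (hβ₁ : ∀ t, HasDerivAt β₁ (β₂ t * ω₃ t - β₃ t * ω₂ t) t)
    (hβ₂ : ∀ t, HasDerivAt β₂ (β₃ t * ω₁ t - β₁ t * ω₃ t) t)
    (hβ₃ : ∀ t, HasDerivAt β₃ (β₁ t * ω₂ t - β₂ t * ω₁ t) t)
    (M₁ M₂ Mα Mβ S : ℝ → ℝ)
    (hM₁ : M₁ = fun t => 2 * ω₁ t)
    (hM₂ : M₂ = fun t => 2 * ω₂ t)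
    (hMα : Mα = fun t => 2 * ω₁ t * α₁ t + 2 * ω₂ t * α₂ t + ω₃ t * α₃ t)
    (hMβ : Mβ = fun t => 2 * ω₁ t * β₁ t + 2 * ω₂ t * β₂ t + ω₃ t * β₃ t)
    (hS : S = fun t => -(Mα t * M₁ t + Mβ t * M₂ t) / (M₁ t ^ 2 + M₂ t ^ 2))
    (t : ℝ) (ht : M₁ t ^ 2 + M₂ t ^ 2 ≠ 0) :
    HasDerivAt S
      (-(((M₁ t ^ 2 + M₂ t ^ 2) * ω₃ t + 4 * α₃ t * M₁ t + 4 * β₃ t * M₂ t) /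
            (2 * (M₁ t ^ 2 + M₂ t ^ 2) ^ 2)) *
        (Mα t * M₂ t - Mβ t * M₁ t)) t := by
  subst hM₁ hM₂ hMα hMβ hS
  simp only [] at ht ⊢
  have hMαd : HasDerivAt (fun t => 2 * ω₁ t * α₁ t + 2 * ω₂ t * α₂ t + ω₃ t * α₃ t)
      ((2 * ((ω₂ t * ω₃ t + β₃ t) / 2)) * α₁ t + 2 * ω₁ t * (α₂ t * ω₃ t - α₃ t * ω₂ t)
      + ((2 * ((-(ω₁ t * ω₃ t) - α₃ t) / 2)) * α₂ t + 2 * ω₂ t * (α₃ t * ω₁ t - α₁ t * ω₃ t))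
      + ((α₂ t - β₁ t) * α₃ t + ω₃ t * (α₁ t * ω₂ t - α₂ t * ω₁ t))) t :=
    ((((hω₁ t).const_mul 2).mul (hα₁ t)).add (((hω₂ t).const_mul 2).mul (hα₂ t))).add
      ((hω₃ t).mul (hα₃ t))
  have hMβd : HasDerivAt (fun t => 2 * ω₁ t * β₁ t + 2 * ω₂ t * β₂ t + ω₃ t * β₃ t)
      ((2 * ((ω₂ t * ω₃ t + β₃ t) / 2)) * β₁ t + 2 * ω₁ t * (β₂ t * ω₃ t - β₃ t * ω₂ t)
      + ((2 * ((-(ω₁ t * ω₃ t) - α₃ t) / 2)) * β₂ t + 2 * ω₂ t * (β₃ t * ω₁ t - β₁ t * ω₃ t))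
      + ((α₂ t - β₁ t) * β₃ t + ω₃ t * (β₁ t * ω₂ t - β₂ t * ω₁ t))) t :=
    ((((hω₁ t).const_mul 2).mul (hβ₁ t)).add (((hω₂ t).const_mul 2).mul (hβ₂ t))).add
      ((hω₃ t).mul (hβ₃ t))
  have hM₁d : HasDerivAt (fun t => 2 * ω₁ t) (2 * ((ω₂ t * ω₃ t + β₃ t) / 2)) t :=
    (hω₁ t).const_mul 2
  have hM₂d : HasDerivAt (fun t => 2 * ω₂ t) (2 * ((-(ω₁ t * ω₃ t) - α₃ t) / 2)) t :=
    (hω₂ t).const_mul 2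
  have hD := ((hM₁d.pow 2).add (hM₂d.pow 2))
  have hN := ((hMαd.mul hM₁d).add (hMβd.mul hM₂d)).neg
  have := hN.div hD ht
  refine this.congr_deriv ?_
  simp only [Pi.add_apply, Pi.mul_apply, Pi.pow_apply, Pi.neg_apply, Nat.cast_ofNat]
  field_simp
  ring
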